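/- Let X be a δ-hyperbolic geodesic metric space. Suppose β : [0, 2d] → X is a path that is the concatenation of two geodesics of length d (from x to y and from y to w), and suppose d(x, w) ≥ 2d − 2C for some C ≥ 0. Then β is a (1, 6C + 16δ)-quasi-geodesic. -/
import Mathlib


/-- `f` restricted to `[a,b]` is a geodesic (parametrized by arclength). -/
def IsGeodesicOn {X : Type*} [MetricSpace X] (f : ℝ → X) (a b : ℝ) : Prop :=
  ∀ s ∈ Set.Icc a b, ∀ t ∈ Set.Icc a b, dist (f s) (f t) = |s - t|

/-- `X` is a geodesic metric space: any two points are joined by a geodesic. -/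
def GeodSpace (X : Type*) [MetricSpace X] : Prop :=
  ∀ x y : X, ∃ f : ℝ → X, IsGeodesicOn f 0 (dist x y) ∧ f 0 = x ∧ f (dist x y) = y

/-- `X` is `δ`-hyperbolic: each side of any geodesic triangle lies in the
`δ`-neighborhood of the union of the other two sides. -/
def DeltaHyp (X : Type*) [MetricSpace X] (δ : ℝ) : Prop :=
  ∀ (T₁ T₂ T₃ : ℝ) (f g h : ℝ → X),
    IsGeodesicOn f 0 T₁ → IsGeodesicOn g 0 T₂ → IsGeodesicOn h 0 T₃ →
    f 0 = h 0 → f T₁ = g 0 → g T₂ = h T₃ →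
    ∀ t ∈ Set.Icc (0 : ℝ) T₃, ∃ s : ℝ,
      (s ∈ Set.Icc (0 : ℝ) T₁ ∧ dist (h t) (f s) ≤ δ) ∨
      (s ∈ Set.Icc (0 : ℝ) T₂ ∧ dist (h t) (g s) ≤ δ)

/-- In a δ-hyperbolic geodesic space, the concatenation of two geodesics of length `d`
whose endpoints are at distance at least `2d − 2C` is a `(1, 6C + 16δ)`-quasi-geodesic. -/
theorem stmt11 {X : Type*} [MetricSpace X] (δ C d : ℝ)
    (hδ : 0 ≤ δ) (hC : 0 ≤ C) (hd : 0 ≤ d)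
    (hgeo : GeodSpace X) (hhyp : DeltaHyp X δ) (β : ℝ → X)
    (h1 : IsGeodesicOn β 0 d) (h2 : IsGeodesicOn β d (2 * d))
    (hK : 2 * d - 2 * C ≤ dist (β 0) (β (2 * d))) :
    ∀ s ∈ Set.Icc (0 : ℝ) (2 * d), ∀ t ∈ Set.Icc (0 : ℝ) (2 * d),
      |s - t| - (6 * C + 16 * δ) ≤ dist (β s) (β t) ∧
      dist (β s) (β t) ≤ |s - t| + (6 * C + 16 * δ) := by
  have key : ∀ u ∈ Set.Icc (0:ℝ) d, ∀ v ∈ Set.Icc d (2*d),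
      (v - u) - 2*C ≤ dist (β u) (β v) ∧ dist (β u) (β v) ≤ v - u := by
    rintro u ⟨hu0, hud⟩ v ⟨hvd, hv2⟩
    have e1 : dist (β 0) (β u) = u := by
      rw [h1 0 ⟨le_refl 0, hd⟩ u ⟨hu0, hud⟩, abs_of_nonpos (by linarith)]; ring
    have e2 : dist (β v) (β (2*d)) = 2*d - v := by
      rw [h2 v ⟨hvd, hv2⟩ (2*d) ⟨by linarith, le_refl _⟩, abs_of_nonpos (by linarith)]; ring
    have e3 : dist (β u) (β d) = d - u := by
      rw [h1 u ⟨hu0, hud⟩ d ⟨hd, le_refl d⟩, abs_of_nonpos (by linarith)]; ring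
    have e4 : dist (β d) (β v) = v - d := by
      rw [h2 d ⟨le_refl d, by linarith⟩ v ⟨hvd, hv2⟩, abs_of_nonpos (by linarith)]; ring
    constructor
    · have t1 := dist_triangle4 (β 0) (β u) (β v) (β (2*d))
      linarith
    · have t2 := dist_triangle (β u) (β d) (β v)
      linarith
  intro s hs t ht
  obtain ⟨hs0, hs2⟩ := hs
  obtain ⟨ht0, ht2⟩ := ht
  rcases le_total s d with hsd | hsd <;> rcases le_total t d with htd | htd
  · rw [h1 s ⟨hs0, hsd⟩ t ⟨ht0, htd⟩]
    constructor <;> linarith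
  · obtain ⟨hl, hr⟩ := key s ⟨hs0, hsd⟩ t ⟨htd, ht2⟩
    rw [abs_of_nonpos (by linarith : s - t ≤ 0)]
    constructor <;> linarith
  · obtain ⟨hl, hr⟩ := key t ⟨ht0, htd⟩ s ⟨hsd, hs2⟩
    rw [dist_comm (β s) (β t), abs_of_nonneg (by linarith : (0:ℝ) ≤ s - t)]
    constructor <;> linarith
  · rw [h2 s ⟨hsd, hs2⟩ t ⟨htd, ht2⟩]
    constructor <;> linarith
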